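/- In the plane ℝ², define the following family ℒ of 'lines': (1) vertical lines V_c = {(x,y) : x = c} for c ∈ ℝ; (2) Euclidean lines of nonnegative slope G_{m,b} = {(x,y) : y = m·x + b} for m ≥ 0 and b ∈ ℝ; (3) translated hyperbola branches H_{a,b} = {(x,y) : x > a and y = b + (x − a)⁻¹} for a, b ∈ ℝ. Then any two distinct points of ℝ² lie on exactly one member of ℒ. -/

import Mathlib

/-- The lines of Salzmann's hyperbola plane: vertical lines, Euclidean lines of
nonnegative slope, and translates of the hyperbola branch `y = x⁻¹`, `x > 0`. -/
def HyperbolaPlaneLines : Set (Set (ℝ × ℝ)) :=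
  {L | (∃ c : ℝ, L = {p : ℝ × ℝ | p.1 = c}) ∨
       (∃ m b : ℝ, 0 ≤ m ∧ L = {p : ℝ × ℝ | p.2 = m * p.1 + b}) ∨
       (∃ a b : ℝ, L = {p : ℝ × ℝ | a < p.1 ∧ p.2 = b + (p.1 - a)⁻¹})}

/-- Existence of a hyperbola branch through two points with negative secant slope. -/
lemma hyp_exists (x₁ y₁ x₂ y₂ : ℝ) (hx : x₁ < x₂) (hy : y₂ < y₁) :
    ∃ a b : ℝ, a < x₁ ∧ y₁ = b + (x₁ - a)⁻¹ ∧ y₂ = b + (x₂ - a)⁻¹ := by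
  have hk : 0 < y₁ - y₂ := by linarith
  have hd : 0 < x₂ - x₁ := by linarith
  obtain ⟨t, ht, heq⟩ : ∃ t : ℝ, 0 < t ∧
      (y₁ - y₂) * t ^ 2 + (y₁ - y₂) * (x₂ - x₁) * t = x₂ - x₁ := by
    set k := y₁ - y₂ with hkdef
    set d := x₂ - x₁ with hddef
    set s := Real.sqrt (k ^ 2 * d ^ 2 + 4 * k * d) with hsdef
    have hs2 : s ^ 2 = k ^ 2 * d ^ 2 + 4 * k * d := Real.sq_sqrt (by positivity)
    have hsnn : 0 ≤ s := Real.sqrt_nonneg _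
    have hs : k * d < s := by nlinarith
    refine ⟨(s - k * d) / (2 * k), div_pos (by linarith) (by linarith), ?_⟩
    have h2 : 2 * k * ((s - k * d) / (2 * k)) + k * d = s := by
      field_simp
      ring
    have h3 : (2 * k * ((s - k * d) / (2 * k)) + k * d) ^ 2 = k ^ 2 * d ^ 2 + 4 * k * d := by
      rw [h2]; exact hs2
    have h4 : 4 * k * (k * ((s - k * d) / (2 * k)) ^ 2 + k * d * ((s - k * d) / (2 * k)) - d) = 0 := by
      linear_combination h3
    rcases mul_eq_zero.mp h4 with h | h
    · exfalso; linarith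
    · linarith
  refine ⟨x₁ - t, y₁ - t⁻¹, by linarith, by simp, ?_⟩
  have h1 : x₂ - (x₁ - t) = t + (x₂ - x₁) := by ring
  rw [h1]
  have htd : 0 < t + (x₂ - x₁) := by linarith
  have hkey : t⁻¹ - (t + (x₂ - x₁))⁻¹ = y₁ - y₂ := by
    rw [inv_sub_inv (ne_of_gt ht) (ne_of_gt htd), div_eq_iff (by positivity)]
    linear_combination -heq
  linarith

/-- Uniqueness of the hyperbola parameters through two given points. -/
lemma hyp_unique (x₁ y₁ x₂ y₂ a b a' b' : ℝ) (hx : x₁ < x₂)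
    (ha : a < x₁) (h1 : y₁ = b + (x₁ - a)⁻¹) (h2 : y₂ = b + (x₂ - a)⁻¹)
    (ha' : a' < x₁) (h1' : y₁ = b' + (x₁ - a')⁻¹) (h2' : y₂ = b' + (x₂ - a')⁻¹) :
    a = a' ∧ b = b' := by
  have hA1 : (0:ℝ) < x₁ - a := by linarith
  have hA2 : (0:ℝ) < x₂ - a := by linarith
  have hB1 : (0:ℝ) < x₁ - a' := by linarith
  have hB2 : (0:ℝ) < x₂ - a' := by linarith
  have e1 : (y₁ - y₂) * ((x₁ - a) * (x₂ - a)) = x₂ - x₁ := by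
    have h : y₁ - y₂ = (x₁ - a)⁻¹ - (x₂ - a)⁻¹ := by linarith
    rw [inv_sub_inv (ne_of_gt hA1) (ne_of_gt hA2)] at h
    rw [h, div_mul_cancel₀]
    · ring
    · positivity
  have e2 : (y₁ - y₂) * ((x₁ - a') * (x₂ - a')) = x₂ - x₁ := by
    have h : y₁ - y₂ = (x₁ - a')⁻¹ - (x₂ - a')⁻¹ := by linarith
    rw [inv_sub_inv (ne_of_gt hB1) (ne_of_gt hB2)] at h
    rw [h, div_mul_cancel₀]
    · ring
    · positivity
  have hyne : 0 < y₁ - y₂ := by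
    have hlt : (x₂ - a)⁻¹ < (x₁ - a)⁻¹ := by
      apply inv_strictAnti₀ hA1 (by linarith)
    linarith
  have h4 : (0:ℝ) < (x₁ + x₂) - (a + a') := by linarith
  have key : (y₁ - y₂) * ((a' - a) * ((x₁ + x₂) - (a + a'))) = 0 := by
    linear_combination e1 - e2
  have haa : a = a' := by
    rcases lt_trichotomy a a' with h | h | h
    · exfalso
      have hpos : 0 < (y₁ - y₂) * ((a' - a) * ((x₁ + x₂) - (a + a'))) :=
        mul_pos hyne (mul_pos (by linarith) h4)
      linarith
    · exact h
    · exfalso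
      have hneg : (y₁ - y₂) * ((a' - a) * ((x₁ + x₂) - (a + a'))) < 0 := by
        have := mul_pos hyne (mul_pos (by linarith : (0:ℝ) < a - a') h4)
        nlinarith
      linarith
  subst haa
  exact ⟨rfl, by linarith⟩

/-- The key case: two points with distinct first coordinates. -/
lemma key_lemma (x₁ y₁ x₂ y₂ : ℝ) (hx : x₁ < x₂) :
    ∃! L : Set (ℝ × ℝ), L ∈ HyperbolaPlaneLines ∧ (x₁, y₁) ∈ L ∧ (x₂, y₂) ∈ L := by
  have hne : x₂ - x₁ ≠ 0 := by linarith
  rcases le_or_gt y₁ y₂ with hy | hy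
  · -- line of nonnegative slope
    obtain ⟨m, b, hm, hp0, hq0⟩ : ∃ m b : ℝ, 0 ≤ m ∧ y₁ = m * x₁ + b ∧ y₂ = m * x₂ + b := by
      refine ⟨(y₂ - y₁) / (x₂ - x₁), y₁ - (y₂ - y₁) / (x₂ - x₁) * x₁,
        div_nonneg (by linarith) (by linarith), by ring, ?_⟩
      field_simp
      ring
    refine ⟨{p : ℝ × ℝ | p.2 = m * p.1 + b}, ⟨Or.inr (Or.inl ⟨m, b, hm, rfl⟩),
      by simpa using hp0, by simpa using hq0⟩, ?_⟩
    rintro L ⟨hL, hp, hq'⟩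
    rcases hL with ⟨c, rfl⟩ | ⟨m', b', hm', rfl⟩ | ⟨a, b'', rfl⟩
    · simp only [Set.mem_setOf_eq] at hp hq'
      exfalso; linarith [hp, hq']
    · simp only [Set.mem_setOf_eq] at hp hq'
      have hmm : m' * (x₂ - x₁) = m * (x₂ - x₁) := by
        linear_combination hp - hq' + hq0 - hp0
      have hm'' : m' = m := mul_right_cancel₀ hne hmm
      rw [hm''] at hp
      have hb'' : b' = b := by linarith
      rw [hm'', hb'']
    · exfalso
      simp only [Set.mem_setOf_eq] at hp hq'
      obtain ⟨ha1, he1⟩ := hp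
      obtain ⟨ha2, he2⟩ := hq'
      have : (x₂ - a)⁻¹ < (x₁ - a)⁻¹ := by
        apply inv_strictAnti₀ (by linarith) (by linarith)
      linarith
  · -- hyperbola
    obtain ⟨a, b, ha, h1, h2⟩ := hyp_exists x₁ y₁ x₂ y₂ hx hy
    refine ⟨{p : ℝ × ℝ | a < p.1 ∧ p.2 = b + (p.1 - a)⁻¹},
      ⟨Or.inr (Or.inr ⟨a, b, rfl⟩), ⟨ha, h1⟩, ⟨by linarith, h2⟩⟩, ?_⟩
    rintro L ⟨hL, hp, hq'⟩
    rcases hL with ⟨c, rfl⟩ | ⟨m', b', hm', rfl⟩ | ⟨a', b'', rfl⟩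
    · simp only [Set.mem_setOf_eq] at hp hq'
      exfalso; linarith [hp, hq']
    · exfalso
      simp only [Set.mem_setOf_eq] at hp hq'
      nlinarith [mul_nonneg hm' (le_of_lt (sub_pos.2 hx)), hp, hq']
    · simp only [Set.mem_setOf_eq] at hp hq'
      obtain ⟨ha1, he1⟩ := hp
      obtain ⟨ha2, he2⟩ := hq'
      obtain ⟨haa, hbb⟩ := hyp_unique x₁ y₁ x₂ y₂ a' b'' a b hx ha1 he1 he2 ha h1 h2
      rw [haa, hbb]

/-- In Salzmann's hyperbola plane, any two distinct points lie on exactly one line. -/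
theorem hyperbolaPlane_exists_unique_line (p q : ℝ × ℝ) (hpq : p ≠ q) :
    ∃! L : Set (ℝ × ℝ), L ∈ HyperbolaPlaneLines ∧ p ∈ L ∧ q ∈ L := by
  rcases lt_trichotomy p.1 q.1 with hx | hx | hx
  · have := key_lemma p.1 p.2 q.1 q.2 hx
    simpa using this
  · -- vertical line
    refine ⟨{r : ℝ × ℝ | r.1 = p.1}, ⟨Or.inl ⟨p.1, rfl⟩, rfl, hx.symm⟩, ?_⟩
    have hy : p.2 ≠ q.2 := by
      intro h
      exact hpq (Prod.ext hx h)
    rintro L ⟨hL, hp, hq⟩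
    rcases hL with ⟨c, rfl⟩ | ⟨m', b', hm', rfl⟩ | ⟨a', b'', rfl⟩
    · simp only [Set.mem_setOf_eq] at hp ⊢
      rw [hp]
    · exfalso
      simp only [Set.mem_setOf_eq] at hp hq
      exact hy (by rw [hp, hq, hx])
    · exfalso
      simp only [Set.mem_setOf_eq] at hp hq
      exact hy (by rw [hp.2, hq.2, hx])
  · have := key_lemma q.1 q.2 p.1 p.2 hx
    simp only [Prod.mk.eta] at this
    obtain ⟨L, ⟨h1, h2, h3⟩, hu⟩ := this
    exact ⟨L, ⟨h1, h3, h2⟩, fun L' ⟨a, b, c⟩ => hu L' ⟨a, c, b⟩⟩
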